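/- For all real parameters η > 0, φ > 0, every α with 0 < α < 1, and every real s with 0 ≤ s < 1, the probability generating function of the three-inflated PCD is ∑_{y=0}^∞ s^y·P(y) = α·s³ + (1−α)·(η²/(φ+η))·[((η−s+1)³ + φη²)/(η−s+1)⁴]. -/

import Mathlib

lemma choose_three_cast (y : ℕ) :
    (((y + 3).choose 3 : ℕ) : ℝ) = ((y : ℝ) + 1) * ((y : ℝ) + 2) * ((y : ℝ) + 3) / 6 := by
  have h : 6 * (y + 3).choose 3 = (y + 1) * (y + 2) * (y + 3) := by
    have h1 : (y + 3).descFactorial 3 = 6 * (y + 3).choose 3 := by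
      rw [Nat.descFactorial_eq_factorial_mul_choose]; norm_num [Nat.factorial]
    have h2 : (y + 3).descFactorial 3 = (y + 1) * ((y + 2) * (y + 3)) := by
      simp [Nat.descFactorial_succ]
    rw [← h1, h2]; ring
  have := congrArg (fun n : ℕ => (n : ℝ)) h
  push_cast at this
  linarith

set_option maxHeartbeats 1000000 in
/-- The probability generating function of the three-inflated PCD. -/
theorem thipcd_pgf (η φ α s : ℝ) (hη : 0 < η) (hφ : 0 < φ)
    (hα0 : 0 < α) (hα1 : α < 1) (hs0 : 0 ≤ s) (hs1 : s < 1) :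
    ∑' y : ℕ, s ^ y *
        (if y = 3 then
          α + (1 - α) * ((η ^ 2 / ((φ + η) * (1 + η) ^ 7))
            * ((1 + η) ^ 3 + 20 * φ * η ^ 2))
        else
          (1 - α) * ((η ^ 2 / ((φ + η) * (1 + η) ^ (y + 4)))
            * ((1 + η) ^ 3
              + (φ * η ^ 2 / 6) * ((y : ℝ) + 1) * ((y : ℝ) + 2) * ((y : ℝ) + 3))))
      = α * s ^ 3 + (1 - α) * (η ^ 2 / (φ + η))
          * (((η - s + 1) ^ 3 + φ * η ^ 2) / (η - s + 1) ^ 4) := by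
  have h1η : (0:ℝ) < 1 + η := by linarith
  have h1η' : (1:ℝ) + η ≠ 0 := ne_of_gt h1η
  have hden : (0:ℝ) < η - s + 1 := by linarith
  have hden' : η - s + 1 ≠ 0 := ne_of_gt hden
  have hfη : φ + η ≠ 0 := by positivity
  have hr0 : 0 ≤ s / (1 + η) := div_nonneg hs0 h1η.le
  have hr1 : s / (1 + η) < 1 := by rw [div_lt_one h1η]; linarith
  have h1mr : 1 - s / (1 + η) = (η - s + 1) / (1 + η) := by field_simp; ring
  have H1 : HasSum (fun y : ℕ => (s / (1 + η)) ^ y) ((1 + η) / (η - s + 1)) := by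
    have := hasSum_geometric_of_lt_one hr0 hr1
    rwa [h1mr, inv_div] at this
  have H2 : HasSum (fun y : ℕ => (((y + 3).choose 3 : ℕ) : ℝ) * (s / (1 + η)) ^ y)
      ((1 + η) ^ 4 / (η - s + 1) ^ 4) := by
    have hnorm : ‖s / (1 + η)‖ < 1 := by rwa [Real.norm_eq_abs, abs_of_nonneg hr0]
    have := hasSum_choose_mul_geometric_of_norm_lt_one (𝕜 := ℝ) 3 hnorm
    rwa [h1mr, div_pow, one_div, inv_div] at this
  have hterm : ∀ y : ℕ,
      s ^ y * ((1 - α) * ((η ^ 2 / ((φ + η) * (1 + η) ^ (y + 4)))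
            * ((1 + η) ^ 3
              + (φ * η ^ 2 / 6) * ((y : ℝ) + 1) * ((y : ℝ) + 2) * ((y : ℝ) + 3))))
      = ((1 - α) * (η ^ 2 / (φ + η)) / (1 + η)) * (s / (1 + η)) ^ y
        + ((1 - α) * (η ^ 2 / (φ + η)) * (φ * η ^ 2) / (1 + η) ^ 4)
            * ((((y + 3).choose 3 : ℕ) : ℝ) * (s / (1 + η)) ^ y) := by
    intro y
    rw [choose_three_cast, div_pow, pow_add]
    have ht : (1 + η) ^ y ≠ 0 := pow_ne_zero _ h1η'
    generalize (1 + η) ^ y = t at ht ⊢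
    generalize s ^ y = u
    generalize ((y : ℝ)) = z
    field_simp
  have hcongr : (fun y : ℕ => s ^ y *
        (if y = 3 then
          α + (1 - α) * ((η ^ 2 / ((φ + η) * (1 + η) ^ 7))
            * ((1 + η) ^ 3 + 20 * φ * η ^ 2))
        else
          (1 - α) * ((η ^ 2 / ((φ + η) * (1 + η) ^ (y + 4)))
            * ((1 + η) ^ 3
              + (φ * η ^ 2 / 6) * ((y : ℝ) + 1) * ((y : ℝ) + 2) * ((y : ℝ) + 3)))))
      = fun y : ℕ =>
        (if y = 3 then α * s ^ 3 else 0)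
        + (((1 - α) * (η ^ 2 / (φ + η)) / (1 + η)) * (s / (1 + η)) ^ y
          + ((1 - α) * (η ^ 2 / (φ + η)) * (φ * η ^ 2) / (1 + η) ^ 4)
              * ((((y + 3).choose 3 : ℕ) : ℝ) * (s / (1 + η)) ^ y)) := by
    funext y
    by_cases hy : y = 3
    · subst hy
      rw [if_pos rfl, if_pos rfl, ← hterm 3]
      have : ((7:ℕ)) = 3 + 4 := rfl
      push_cast
      ring
    · rw [if_neg hy, if_neg hy, hterm y, zero_add]
  rw [hcongr]
  have H3 : HasSum (fun y : ℕ =>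
      (if y = 3 then α * s ^ 3 else 0)
      + (((1 - α) * (η ^ 2 / (φ + η)) / (1 + η)) * (s / (1 + η)) ^ y
        + ((1 - α) * (η ^ 2 / (φ + η)) * (φ * η ^ 2) / (1 + η) ^ 4)
            * ((((y + 3).choose 3 : ℕ) : ℝ) * (s / (1 + η)) ^ y)))
      (α * s ^ 3
        + (((1 - α) * (η ^ 2 / (φ + η)) / (1 + η)) * ((1 + η) / (η - s + 1))
          + ((1 - α) * (η ^ 2 / (φ + η)) * (φ * η ^ 2) / (1 + η) ^ 4)
              * ((1 + η) ^ 4 / (η - s + 1) ^ 4))) :=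
    (hasSum_ite_eq (3 : ℕ) (α * s ^ 3)).add
      ((H1.mul_left _).add (H2.mul_left _))
  rw [H3.tsum_eq]
  field_simp
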